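/- Let a : [1, 1+2^L]² → ℂ be continuous and suppose a_{s₁,s₂} = 0 whenever s₁ = 1 or s₂ = 1. Then the two-parameter 2-variation satisfies V²(a_s : s ∈ [1,1+2^L]²) ≤ 2 · Σ_{l₁,l₂ ∈ ℤ₊} ( Σ_{j₁=1}^{2^{l₁}} Σ_{j₂=1}^{2^{l₂}} |Δ_{l₁,l₂,j₁,j₂}(a)|² )^{1/2}, where Δ_{l₁,l₂,j₁,j₂}(a) := a_{1+j₁2^{L-l₁}, 1+j₂2^{L-l₂}} − a_{1+(j₁−1)2^{L-l₁}, 1+j₂2^{L-l₂}} − a_{1+j₁2^{L-l₁}, 1+(j₂−1)2^{L-l₂}} + a_{1+(j₁−1)2^{L-l₁}, 1+(j₂−1)2^{L-l₂}}. -/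

import Mathlib

open Set ENNReal Finset NNReal

/-- Two-parameter 2-variation seminorm of `a` over `I ⊆ ℝ × ℝ`: the supremum over finite chains
strictly increasing in the coordinatewise order of the ℓ² sum of consecutive differences. -/
noncomputable def var2two (a : ℝ → ℝ → ℂ) (I : Set (ℝ × ℝ)) : ℝ≥0∞ :=
  ⨆ (J : ℕ) (u : Fin (J + 1) → ℝ × ℝ)
    (_ : ∀ j : Fin J, (u j.castSucc).1 < (u j.succ).1 ∧ (u j.castSucc).2 < (u j.succ).2)
    (_ : ∀ j, u j ∈ I),
    (∑ j : Fin J,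
      ((‖a (u j.succ).1 (u j.succ).2 - a (u j.castSucc).1 (u j.castSucc).2‖₊ : ℝ≥0∞)) ^ 2)
        ^ (1 / 2 : ℝ)


lemma enn_sq_add_le (x y : ℝ≥0∞) : (x + y) ^ 2 ≤ 2 * x ^ 2 + 2 * y ^ 2 := by
  rcases eq_or_ne x ⊤ with rfl | hx
  · have : (2:ℝ≥0∞) * ⊤ ^ 2 = ⊤ := by simp [pow_two]
    rw [this]; exact le_top.trans (le_add_right le_rfl)
  rcases eq_or_ne y ⊤ with rfl | hy
  · have : (2:ℝ≥0∞) * ⊤ ^ 2 = ⊤ := by simp [pow_two]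
    rw [this]; exact le_top.trans (le_add_left le_rfl)
  lift x to ℝ≥0 using hx
  lift y to ℝ≥0 using hy
  have h2 : 2 * x * y ≤ x ^ 2 + y ^ 2 := two_mul_le_add_sq x y
  have h : ((x + y) ^ 2 : ℝ≥0) ≤ 2 * x ^ 2 + 2 * y ^ 2 := by
    calc (x + y) ^ 2 = x ^ 2 + 2 * x * y + y ^ 2 := by ring
      _ ≤ x ^ 2 + (x ^ 2 + y ^ 2) + y ^ 2 := by exact add_le_add (add_le_add le_rfl h2) le_rfl
      _ = 2 * x ^ 2 + 2 * y ^ 2 := by ring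
  calc ((x:ℝ≥0∞) + y) ^ 2 = (((x + y)^2 : ℝ≥0) : ℝ≥0∞) := by push_cast; ring
    _ ≤ ((2 * x ^ 2 + 2 * y ^ 2 : ℝ≥0) : ℝ≥0∞) := ENNReal.coe_le_coe.2 h
    _ = 2 * (x:ℝ≥0∞) ^ 2 + 2 * (y:ℝ≥0∞) ^ 2 := by push_cast; ring

lemma pow_two_rpow (x : ℝ≥0∞) : x ^ (2:ℕ) = x ^ (2:ℝ) := by
  rw [← ENNReal.rpow_natCast]; norm_num

lemma enn_minkowski {ι : Type*} (J : ℕ) (s : Finset ι) (f : ι → Fin J → ℝ≥0∞) :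
    (∑ j : Fin J, (∑ i ∈ s, f i j) ^ 2) ^ (1 / 2 : ℝ)
      ≤ ∑ i ∈ s, (∑ j : Fin J, (f i j) ^ 2) ^ (1 / 2 : ℝ) := by
  classical
  induction s using Finset.cons_induction with
  | empty =>
      have : (∑ j : Fin J, ((0:ℝ≥0∞)) ^ 2) = 0 := by simp
      simp only [Finset.sum_empty]
      rw [this, ENNReal.zero_rpow_of_pos (by norm_num)]
  | cons a s ha ih =>
      simp only [Finset.sum_cons]
      calc (∑ j : Fin J, (f a j + ∑ i ∈ s, f i j) ^ 2) ^ (1 / 2 : ℝ)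
          ≤ (∑ j : Fin J, (f a j) ^ 2) ^ (1 / 2 : ℝ)
            + (∑ j : Fin J, (∑ i ∈ s, f i j) ^ 2) ^ (1 / 2 : ℝ) := by
            simp only [pow_two_rpow]
            exact ENNReal.Lp_add_le Finset.univ (fun j => f a j)
              (fun j => ∑ i ∈ s, f i j) (by norm_num : (1:ℝ) ≤ 2)
        _ ≤ _ := add_le_add le_rfl ih


lemma sum_comp_le {J : ℕ} (A : Finset (Fin J)) (σ : Fin J → ℕ × ℕ)
    (hinj : ∀ j ∈ A, ∀ j' ∈ A, σ j = σ j' → j = j')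
    (box : Finset (ℕ × ℕ)) (g : ℕ × ℕ → ℝ≥0∞)
    (hbox : ∀ j ∈ A, g (σ j) ≠ 0 → σ j ∈ box) :
    ∑ j ∈ A, g (σ j) ≤ ∑ p ∈ box, g p := by
  classical
  rw [← Finset.sum_filter_ne_zero A (f := fun j => g (σ j))]
  set A' : Finset (Fin J) := A.filter (fun j => g (σ j) ≠ 0) with hA'
  have hinj' : ∀ j ∈ A', ∀ j' ∈ A', σ j = σ j' → j = j' := by
    intro j hj j' hj' he
    exact hinj j (Finset.mem_of_mem_filter j hj) j' (Finset.mem_of_mem_filter j' hj') he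
  rw [← Finset.sum_image (f := g) hinj']
  refine Finset.sum_le_sum_of_subset ?_
  intro p hp
  rw [Finset.mem_image] at hp
  obtain ⟨j, hj, rfl⟩ := hp
  rw [hA', Finset.mem_filter] at hj
  exact hbox j hj.1 hj.2

lemma counting {J : ℕ} (q : Fin (J + 1) → ℕ × ℕ) (hq : Monotone q)
    (box : Finset (ℕ × ℕ)) (G : ℕ × ℕ → ℂ)
    (hbox : ∀ j : Fin (J+1), G (q j) ≠ 0 → q j ∈ box) :
    ∑ j : Fin J, ((‖G (q j.succ) - G (q j.castSucc)‖₊ : ℝ≥0∞)) ^ 2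
      ≤ 4 * ∑ p ∈ box, ((‖G p‖₊ : ℝ≥0∞)) ^ 2 := by
  classical
  set g : ℕ × ℕ → ℝ≥0∞ := fun p => ((‖G p‖₊ : ℝ≥0∞)) ^ 2 with hg
  set A : Finset (Fin J) := Finset.univ.filter (fun j => q j.castSucc ≠ q j.succ) with hA
  have hmemA : ∀ j, j ∈ A ↔ q j.castSucc ≠ q j.succ := by
    intro j; simp [hA]
  have hboxg : ∀ (j : Fin (J+1)), g (q j) ≠ 0 → q j ∈ box := by
    intro j hne
    refine hbox j (fun hG => hne ?_)
    simp [hg, hG]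
  have hsub : ∑ j : Fin J, ((‖G (q j.succ) - G (q j.castSucc)‖₊ : ℝ≥0∞)) ^ 2
      = ∑ j ∈ A, ((‖G (q j.succ) - G (q j.castSucc)‖₊ : ℝ≥0∞)) ^ 2 := by
    refine (Finset.sum_subset (Finset.subset_univ A) ?_).symm
    intro j _ hj
    have h : q j.castSucc = q j.succ := by
      by_contra h; exact hj ((hmemA j).2 h)
    simp [h]
  have hinj1 : ∀ j ∈ A, ∀ j' ∈ A, q j.succ = q j'.succ → j = j' := by
    intro j hj j' hj' heq
    by_contra hne
    rcases Ne.lt_or_gt hne with h | h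
    · have h1 : q j.succ ≤ q j'.castSucc := hq (Fin.succ_le_castSucc_iff.2 h)
      have h2 : q j'.castSucc ≤ q j'.succ := hq (Fin.castSucc_le_succ j')
      have : q j'.castSucc = q j'.succ := le_antisymm h2 (heq ▸ h1)
      exact (hmemA j').1 hj' this
    · have h1 : q j'.succ ≤ q j.castSucc := hq (Fin.succ_le_castSucc_iff.2 h)
      have h2 : q j.castSucc ≤ q j.succ := hq (Fin.castSucc_le_succ j)
      have : q j.castSucc = q j.succ := le_antisymm h2 (by rw [heq]; exact h1)
      exact (hmemA j).1 hj this
  have hinj2 : ∀ j ∈ A, ∀ j' ∈ A, q j.castSucc = q j'.castSucc → j = j' := by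
    intro j hj j' hj' heq
    by_contra hne
    rcases Ne.lt_or_gt hne with h | h
    · have h1 : q j.succ ≤ q j'.castSucc := hq (Fin.succ_le_castSucc_iff.2 h)
      have h2 : q j.castSucc ≤ q j.succ := hq (Fin.castSucc_le_succ j)
      have : q j.castSucc = q j.succ := le_antisymm h2 (heq ▸ h1)
      exact (hmemA j).1 hj this
    · have h1 : q j'.succ ≤ q j.castSucc := hq (Fin.succ_le_castSucc_iff.2 h)
      have h2 : q j'.castSucc ≤ q j'.succ := hq (Fin.castSucc_le_succ j')
      have : q j'.castSucc = q j'.succ := le_antisymm h2 (by rw [heq] at h1; exact h1)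
      exact (hmemA j').1 hj' this
  calc ∑ j : Fin J, ((‖G (q j.succ) - G (q j.castSucc)‖₊ : ℝ≥0∞)) ^ 2
      = ∑ j ∈ A, ((‖G (q j.succ) - G (q j.castSucc)‖₊ : ℝ≥0∞)) ^ 2 := hsub
    _ ≤ ∑ j ∈ A, (2 * g (q j.succ) + 2 * g (q j.castSucc)) := by
        refine Finset.sum_le_sum ?_
        intro j _
        have h1 : (‖G (q j.succ) - G (q j.castSucc)‖₊ : ℝ≥0∞)
            ≤ (‖G (q j.succ)‖₊ : ℝ≥0∞) + (‖G (q j.castSucc)‖₊ : ℝ≥0∞) := by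
          exact_mod_cast nnnorm_sub_le _ _
        calc ((‖G (q j.succ) - G (q j.castSucc)‖₊ : ℝ≥0∞)) ^ 2
            ≤ ((‖G (q j.succ)‖₊ : ℝ≥0∞) + (‖G (q j.castSucc)‖₊ : ℝ≥0∞)) ^ 2 :=
              pow_le_pow_left' h1 2
          _ ≤ 2 * g (q j.succ) + 2 * g (q j.castSucc) := enn_sq_add_le _ _
    _ = 2 * (∑ j ∈ A, g (q j.succ)) + 2 * (∑ j ∈ A, g (q j.castSucc)) := by
        rw [Finset.sum_add_distrib, Finset.mul_sum, Finset.mul_sum]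
    _ ≤ 2 * (∑ p ∈ box, g p) + 2 * (∑ p ∈ box, g p) := by
        refine add_le_add ?_ ?_
        · exact mul_le_mul_right (sum_comp_le A _ hinj1 box g (fun j _ => hboxg j.succ)) 2
        · exact mul_le_mul_right (sum_comp_le A _ hinj2 box g (fun j _ => hboxg j.castSucc)) 2
    _ = 4 * ∑ p ∈ box, g p := by ring


noncomputable def gridP (L m : ℕ) (i : ℕ) : ℝ := 1 + (i : ℝ) * (2 : ℝ) ^ ((L : ℝ) - (m : ℝ))

lemma rpow2_pos (x : ℝ) : (0:ℝ) < (2:ℝ) ^ x := Real.rpow_pos_of_pos (by norm_num) x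

lemma gridP_scale (L m l j : ℕ) (hl : l ≤ m) :
    gridP L m (2 ^ (m - l) * j) = 1 + (j : ℝ) * (2 : ℝ) ^ ((L : ℝ) - (l : ℝ)) := by
  unfold gridP
  have h1 : ((2 ^ (m - l) * j : ℕ) : ℝ) = (2:ℝ) ^ ((m - l : ℕ) : ℝ) * (j : ℝ) := by
    push_cast
    rw [Real.rpow_natCast]
  have h2 : ((m - l : ℕ) : ℝ) = (m : ℝ) - (l : ℝ) := by
    rw [Nat.cast_sub hl]
  have h3 : (2:ℝ) ^ ((m:ℝ) - (l:ℝ)) * (2:ℝ) ^ ((L:ℝ) - (m:ℝ)) = (2:ℝ) ^ ((L:ℝ) - (l:ℝ)) := by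
    rw [← Real.rpow_add (by norm_num : (0:ℝ) < 2)]
    ring_nf
  rw [h1, h2, ← h3]
  ring

lemma gridP_zero (L m : ℕ) : gridP L m 0 = 1 := by simp [gridP]

lemma gridP_mono (L m : ℕ) : StrictMono (fun i : ℕ => gridP L m i) := by
  intro i j hij
  have h := rpow2_pos ((L : ℝ) - (m : ℝ))
  have h2 : (i:ℝ) * (2:ℝ) ^ ((L : ℝ) - (m : ℝ)) < (j:ℝ) * (2:ℝ) ^ ((L : ℝ) - (m : ℝ)) :=
    mul_lt_mul_of_pos_right (by exact_mod_cast hij) h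
  simp only [gridP]
  linarith

lemma gridP_top (L m : ℕ) : gridP L m (2 ^ m) = 1 + 2 ^ L := by
  have h := gridP_scale L m 0 1 (Nat.zero_le m)
  simp only [Nat.sub_zero, mul_one, Nat.cast_one, one_mul, Nat.cast_zero, sub_zero] at h
  rw [h, Real.rpow_natCast]

lemma gridP_mem (L m i : ℕ) (hi : i ≤ 2 ^ m) : gridP L m i ∈ Set.Icc (1:ℝ) (1 + 2 ^ L) := by
  constructor
  · have h : gridP L m 0 ≤ gridP L m i := (gridP_mono L m).monotone (Nat.zero_le i)
    rw [gridP_zero] at h; exact h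
  · have h : gridP L m i ≤ gridP L m (2 ^ m) := (gridP_mono L m).monotone hi
    rw [gridP_top] at h; exact h

lemma telescope (f : ℕ → ℂ) (m : ℕ) :
    ∑ l ∈ Finset.Icc 1 m, (f l - f (l - 1)) = f m - f 0 := by
  induction m with
  | zero => simp
  | succ n ih =>
      rw [Finset.sum_Icc_succ_top (by omega), ih]
      simp only [Nat.add_sub_cancel]
      ring

def rr (m l i : ℕ) : ℕ := 2 ^ (m - l) * (i / 2 ^ (m - l))

lemma rr_m (m i : ℕ) : rr m m i = i := by simp [rr]

lemma rr_zero (m i : ℕ) (hi : i < 2 ^ m) : rr m 0 i = 0 := by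
  simp [rr, Nat.div_eq_of_lt hi]

lemma rr_le (m l i : ℕ) : rr m l i ≤ i := by
  rw [rr, mul_comm]; exact Nat.div_mul_le_self i _

lemma one_mem_Icc (L : ℕ) : (1:ℝ) ∈ Set.Icc (1:ℝ) (1 + 2 ^ L) := by
  constructor
  · exact le_refl 1
  · have : (0:ℝ) < 2 ^ L := by positivity
    linarith

lemma decomp (L m : ℕ) (a : ℝ → ℝ → ℂ)
    (hvan : ∀ s₁ ∈ Set.Icc (1:ℝ) (1+2^L), ∀ s₂ ∈ Set.Icc (1:ℝ) (1+2^L),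
      (s₁ = 1 ∨ s₂ = 1) → a s₁ s₂ = 0)
    (i₁ i₂ : ℕ) (h1 : i₁ < 2 ^ m) (h2 : i₂ < 2 ^ m) :
    a (gridP L m i₁) (gridP L m i₂)
      = ∑ l₁ ∈ Finset.Icc 1 m, ∑ l₂ ∈ Finset.Icc 1 m,
          (a (gridP L m (rr m l₁ i₁)) (gridP L m (rr m l₂ i₂))
           - a (gridP L m (rr m (l₁-1) i₁)) (gridP L m (rr m l₂ i₂))
           - a (gridP L m (rr m l₁ i₁)) (gridP L m (rr m (l₂-1) i₂))
           + a (gridP L m (rr m (l₁-1) i₁)) (gridP L m (rr m (l₂-1) i₂))) := by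
  have hmem : ∀ i l, i < 2^m → gridP L m (rr m l i) ∈ Set.Icc (1:ℝ) (1+2^L) := fun i l hi =>
    gridP_mem L m _ (le_trans (rr_le m l i) (le_of_lt hi))
  have inner : ∀ l₁,
      (∑ l₂ ∈ Finset.Icc 1 m,
          (a (gridP L m (rr m l₁ i₁)) (gridP L m (rr m l₂ i₂))
           - a (gridP L m (rr m (l₁-1) i₁)) (gridP L m (rr m l₂ i₂))
           - a (gridP L m (rr m l₁ i₁)) (gridP L m (rr m (l₂-1) i₂))
           + a (gridP L m (rr m (l₁-1) i₁)) (gridP L m (rr m (l₂-1) i₂))))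
      = a (gridP L m (rr m l₁ i₁)) (gridP L m i₂)
        - a (gridP L m (rr m (l₁-1) i₁)) (gridP L m i₂) := by
    intro l₁
    have ht := telescope (fun l₂ => a (gridP L m (rr m l₁ i₁)) (gridP L m (rr m l₂ i₂))
        - a (gridP L m (rr m (l₁-1) i₁)) (gridP L m (rr m l₂ i₂))) m
    rw [Finset.sum_congr rfl (fun l₂ _ => by ring :
      ∀ l₂ ∈ Finset.Icc 1 m,
          (a (gridP L m (rr m l₁ i₁)) (gridP L m (rr m l₂ i₂))
           - a (gridP L m (rr m (l₁-1) i₁)) (gridP L m (rr m l₂ i₂))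
           - a (gridP L m (rr m l₁ i₁)) (gridP L m (rr m (l₂-1) i₂))
           + a (gridP L m (rr m (l₁-1) i₁)) (gridP L m (rr m (l₂-1) i₂)))
          = ((fun l₂ => a (gridP L m (rr m l₁ i₁)) (gridP L m (rr m l₂ i₂))
           - a (gridP L m (rr m (l₁-1) i₁)) (gridP L m (rr m l₂ i₂))) l₂
            - (fun l₂ => a (gridP L m (rr m l₁ i₁)) (gridP L m (rr m l₂ i₂))
           - a (gridP L m (rr m (l₁-1) i₁)) (gridP L m (rr m l₂ i₂))) (l₂ - 1))), ht]
    simp only [rr_m, rr_zero m i₂ h2, gridP_zero]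
    rw [hvan _ (hmem i₁ l₁ h1) 1 (one_mem_Icc L) (Or.inr rfl),
        hvan _ (hmem i₁ (l₁-1) h1) 1 (one_mem_Icc L) (Or.inr rfl)]
    ring
  rw [Finset.sum_congr rfl (fun l₁ _ => inner l₁)]
  have ht := telescope (fun l₁ => a (gridP L m (rr m l₁ i₁)) (gridP L m i₂)) m
  rw [ht]
  simp only [rr_m, rr_zero m i₁ h1, gridP_zero]
  rw [hvan 1 (one_mem_Icc L) _ (gridP_mem L m i₂ (le_of_lt h2)) (Or.inl rfl)]
  ring

noncomputable def Dterm (L : ℕ) (a : ℝ → ℝ → ℂ) (l₁ l₂ j₁ j₂ : ℕ) : ℂ :=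
  a (1 + (j₁ : ℝ) * (2 : ℝ) ^ ((L : ℝ) - (l₁ : ℝ)))
    (1 + (j₂ : ℝ) * (2 : ℝ) ^ ((L : ℝ) - (l₂ : ℝ)))
  - a (1 + ((j₁ : ℝ) - 1) * (2 : ℝ) ^ ((L : ℝ) - (l₁ : ℝ)))
    (1 + (j₂ : ℝ) * (2 : ℝ) ^ ((L : ℝ) - (l₂ : ℝ)))
  - a (1 + (j₁ : ℝ) * (2 : ℝ) ^ ((L : ℝ) - (l₁ : ℝ)))
    (1 + ((j₂ : ℝ) - 1) * (2 : ℝ) ^ ((L : ℝ) - (l₂ : ℝ)))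
  + a (1 + ((j₁ : ℝ) - 1) * (2 : ℝ) ^ ((L : ℝ) - (l₁ : ℝ)))
    (1 + ((j₂ : ℝ) - 1) * (2 : ℝ) ^ ((L : ℝ) - (l₂ : ℝ)))

noncomputable def S2 (L : ℕ) (a : ℝ → ℝ → ℂ) (l₁ l₂ : ℕ) : ℝ≥0∞ :=
  (∑ j₁ ∈ Finset.Icc (1:ℕ) (2 ^ l₁), ∑ j₂ ∈ Finset.Icc (1:ℕ) (2 ^ l₂),
    ((‖Dterm L a l₁ l₂ j₁ j₂‖₊ : ℝ≥0∞)) ^ 2) ^ (1 / 2 : ℝ)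

/-- renormalized double difference at scale (l₁,l₂), index pair p -/
noncomputable def Gl (L m l₁ l₂ : ℕ) (a : ℝ → ℝ → ℂ) (p : ℕ × ℕ) : ℂ :=
  a (gridP L m (2^(m-l₁) * p.1)) (gridP L m (2^(m-l₂) * p.2))
  - a (gridP L m (2^(m-l₁+1) * (p.1/2))) (gridP L m (2^(m-l₂) * p.2))
  - a (gridP L m (2^(m-l₁) * p.1)) (gridP L m (2^(m-l₂+1) * (p.2/2)))
  + a (gridP L m (2^(m-l₁+1) * (p.1/2))) (gridP L m (2^(m-l₂+1) * (p.2/2)))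

lemma rr_pred (m l i : ℕ) (h1 : 1 ≤ l) (h2 : l ≤ m) :
    rr m (l-1) i = 2^(m-l+1) * ((i / 2^(m-l)) / 2) := by
  rw [rr, show m - (l-1) = m-l+1 by omega, Nat.div_div_eq_div_mul, ← pow_succ]

lemma Q_eq_G (L m l₁ l₂ : ℕ) (a : ℝ → ℝ → ℂ)
    (h11 : 1 ≤ l₁) (h1m : l₁ ≤ m) (h21 : 1 ≤ l₂) (h2m : l₂ ≤ m) (i₁ i₂ : ℕ) :
    a (gridP L m (rr m l₁ i₁)) (gridP L m (rr m l₂ i₂))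
    - a (gridP L m (rr m (l₁-1) i₁)) (gridP L m (rr m l₂ i₂))
    - a (gridP L m (rr m l₁ i₁)) (gridP L m (rr m (l₂-1) i₂))
    + a (gridP L m (rr m (l₁-1) i₁)) (gridP L m (rr m (l₂-1) i₂))
    = Gl L m l₁ l₂ a (i₁ / 2^(m-l₁), i₂ / 2^(m-l₂)) := by
  rw [rr_pred m l₁ i₁ h11 h1m, rr_pred m l₂ i₂ h21 h2m, Gl]
  simp only [rr]

lemma Gl_even (L m l₁ l₂ : ℕ) (a : ℝ → ℝ → ℂ) (p : ℕ × ℕ)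
    (h : p.1 % 2 = 0 ∨ p.2 % 2 = 0) : Gl L m l₁ l₂ a p = 0 := by
  rcases h with h | h
  · have he : 2^(m-l₁+1) * (p.1/2) = 2^(m-l₁) * p.1 := by
      rw [pow_succ, mul_assoc]
      congr 1
      omega
    rw [Gl, he]; ring
  · have he : 2^(m-l₂+1) * (p.2/2) = 2^(m-l₂) * p.2 := by
      rw [pow_succ, mul_assoc]
      congr 1
      omega
    rw [Gl, he]; ring

lemma Gl_odd (L m l₁ l₂ : ℕ) (a : ℝ → ℝ → ℂ) (p : ℕ × ℕ)
    (h1m : l₁ ≤ m) (h2m : l₂ ≤ m)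
    (h1 : p.1 % 2 = 1) (h2 : p.2 % 2 = 1) :
    Gl L m l₁ l₂ a p = Dterm L a l₁ l₂ p.1 p.2 := by
  have he1 : 2^(m-l₁+1) * (p.1/2) = 2^(m-l₁) * (p.1 - 1) := by
    rw [pow_succ, mul_assoc]; congr 1; omega
  have he2 : 2^(m-l₂+1) * (p.2/2) = 2^(m-l₂) * (p.2 - 1) := by
    rw [pow_succ, mul_assoc]; congr 1; omega
  have hc1 : ((p.1 - 1 : ℕ) : ℝ) = (p.1 : ℝ) - 1 := by
    rw [Nat.cast_sub (by omega)]; norm_num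
  have hc2 : ((p.2 - 1 : ℕ) : ℝ) = (p.2 : ℝ) - 1 := by
    rw [Nat.cast_sub (by omega)]; norm_num
  rw [Gl, Dterm, he1, he2, gridP_scale L m l₁ p.1 h1m, gridP_scale L m l₂ p.2 h2m,
      gridP_scale L m l₁ (p.1 - 1) h1m, gridP_scale L m l₂ (p.2 - 1) h2m, hc1, hc2]

lemma Gl_le_Dterm (L m l₁ l₂ : ℕ) (a : ℝ → ℝ → ℂ) (p : ℕ × ℕ)
    (h1m : l₁ ≤ m) (h2m : l₂ ≤ m) :
    ((‖Gl L m l₁ l₂ a p‖₊ : ℝ≥0∞)) ^ 2 ≤ ((‖Dterm L a l₁ l₂ p.1 p.2‖₊ : ℝ≥0∞)) ^ 2 := by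
  rcases Nat.mod_two_eq_zero_or_one p.1 with h1 | h1
  · rw [Gl_even L m l₁ l₂ a p (Or.inl h1)]; simp
  rcases Nat.mod_two_eq_zero_or_one p.2 with h2 | h2
  · rw [Gl_even L m l₁ l₂ a p (Or.inr h2)]; simp
  rw [Gl_odd L m l₁ l₂ a p h1m h2m h1 h2]

lemma div_mem_box (m l i : ℕ) (h1 : 1 ≤ l) (h2 : l ≤ m) (hi : i < 2 ^ m)
    (hodd : (i / 2^(m-l)) % 2 = 1) : i / 2^(m-l) ∈ Finset.Icc 1 (2^l) := by
  have hlt : i / 2^(m-l) < 2^l := by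
    rw [Nat.div_lt_iff_lt_mul (by positivity)]
    calc i < 2^m := hi
      _ = 2^l * 2^(m-l) := by rw [← pow_add]; congr 1; omega
  rw [Finset.mem_Icc]
  generalize hgen : i / 2^(m-l) = n at hodd hlt
  omega

lemma four_rpow_half : ((4:ℝ≥0∞)) ^ ((1:ℝ)/2) = 2 := by
  rw [show (4:ℝ≥0∞) = 2^(2:ℕ) by norm_num, ← ENNReal.rpow_natCast, ← ENNReal.rpow_mul]
  norm_num

set_option maxHeartbeats 2000000 in
lemma core (L m J : ℕ) (a : ℝ → ℝ → ℂ)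
    (hvan : ∀ s₁ ∈ Set.Icc (1:ℝ) (1+2^L), ∀ s₂ ∈ Set.Icc (1:ℝ) (1+2^L),
      (s₁ = 1 ∨ s₂ = 1) → a s₁ s₂ = 0)
    (k : Fin (J+1) → ℕ × ℕ)
    (hk : ∀ j : Fin J, (k j.castSucc).1 < (k j.succ).1 ∧ (k j.castSucc).2 < (k j.succ).2)
    (hk2 : ∀ j, (k j).1 < 2 ^ m ∧ (k j).2 < 2 ^ m) :
    (∑ j : Fin J, ((‖a (gridP L m (k j.succ).1) (gridP L m (k j.succ).2)
        - a (gridP L m (k j.castSucc).1) (gridP L m (k j.castSucc).2)‖₊ : ℝ≥0∞)) ^ 2) ^ (1/2:ℝ)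
      ≤ 2 * ∑' l : ℕ+ × ℕ+, S2 L a l.1 l.2 := by
  classical
  set s : Finset (ℕ × ℕ) := Finset.Icc 1 m ×ˢ Finset.Icc 1 m with hs
  set Qc : ℕ × ℕ → ℕ × ℕ → ℂ := fun l i =>
    a (gridP L m (rr m l.1 i.1)) (gridP L m (rr m l.2 i.2))
    - a (gridP L m (rr m (l.1-1) i.1)) (gridP L m (rr m l.2 i.2))
    - a (gridP L m (rr m l.1 i.1)) (gridP L m (rr m (l.2-1) i.2))
    + a (gridP L m (rr m (l.1-1) i.1)) (gridP L m (rr m (l.2-1) i.2)) with hQc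
  have hdec : ∀ i : ℕ × ℕ, i.1 < 2^m → i.2 < 2^m →
      a (gridP L m i.1) (gridP L m i.2) = ∑ l ∈ s, Qc l i := by
    intro i hi1 hi2
    rw [hs, Finset.sum_product]
    exact decomp L m a hvan i.1 i.2 hi1 hi2
  have hstep : ∀ j : Fin J,
      a (gridP L m (k j.succ).1) (gridP L m (k j.succ).2)
        - a (gridP L m (k j.castSucc).1) (gridP L m (k j.castSucc).2)
      = ∑ l ∈ s, (Qc l (k j.succ) - Qc l (k j.castSucc)) := by
    intro j
    rw [Finset.sum_sub_distrib,
      ← hdec (k j.succ) (hk2 j.succ).1 (hk2 j.succ).2,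
      ← hdec (k j.castSucc) (hk2 j.castSucc).1 (hk2 j.castSucc).2]
  -- strict monotonicity of coordinates of k
  have hk1mono : Monotone (fun j => (k j).1) :=
    (Fin.strictMono_iff_lt_succ.2 (fun j => (hk j).1)).monotone
  have hk2mono : Monotone (fun j => (k j).2) :=
    (Fin.strictMono_iff_lt_succ.2 (fun j => (hk j).2)).monotone
  -- per-scale bound
  have hscale : ∀ l ∈ s,
      (∑ j : Fin J, ((‖Qc l (k j.succ) - Qc l (k j.castSucc)‖₊ : ℝ≥0∞)) ^ 2) ^ (1/2:ℝ)
        ≤ 2 * S2 L a l.1 l.2 := by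
    intro l hl
    rw [hs, Finset.mem_product, Finset.mem_Icc, Finset.mem_Icc] at hl
    obtain ⟨⟨h11, h1m⟩, ⟨h21, h2m⟩⟩ := hl
    set q : Fin (J+1) → ℕ × ℕ := fun j => ((k j).1 / 2^(m-l.1), (k j).2 / 2^(m-l.2)) with hq
    have hqmono : Monotone q := by
      intro j j' hj
      exact ⟨Nat.div_le_div_right (hk1mono hj), Nat.div_le_div_right (hk2mono hj)⟩
    set G : ℕ × ℕ → ℂ := Gl L m l.1 l.2 a with hG
    have hQG : ∀ j : Fin (J+1), Qc l (k j) = G (q j) := by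
      intro j
      rw [hQc, hG, hq]
      exact Q_eq_G L m l.1 l.2 a h11 h1m h21 h2m (k j).1 (k j).2
    set box : Finset (ℕ × ℕ) := Finset.Icc 1 (2^l.1) ×ˢ Finset.Icc 1 (2^l.2) with hbox
    have hboxmem : ∀ j : Fin (J+1), G (q j) ≠ 0 → q j ∈ box := by
      intro j hne
      have hodd1 : (q j).1 % 2 = 1 := by
        rcases Nat.mod_two_eq_zero_or_one (q j).1 with h | h
        · exact absurd (Gl_even L m l.1 l.2 a (q j) (Or.inl h)) hne
        · exact h
      have hodd2 : (q j).2 % 2 = 1 := by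
        rcases Nat.mod_two_eq_zero_or_one (q j).2 with h | h
        · exact absurd (Gl_even L m l.1 l.2 a (q j) (Or.inr h)) hne
        · exact h
      rw [hbox, Finset.mem_product]
      exact ⟨div_mem_box m l.1 (k j).1 h11 h1m (hk2 j).1 hodd1,
             div_mem_box m l.2 (k j).2 h21 h2m (hk2 j).2 hodd2⟩
    have hcount : ∑ j : Fin J, ((‖Qc l (k j.succ) - Qc l (k j.castSucc)‖₊ : ℝ≥0∞)) ^ 2
        ≤ 4 * ∑ p ∈ box, ((‖G p‖₊ : ℝ≥0∞)) ^ 2 := by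
      have := counting q hqmono box G hboxmem
      calc ∑ j : Fin J, ((‖Qc l (k j.succ) - Qc l (k j.castSucc)‖₊ : ℝ≥0∞)) ^ 2
          = ∑ j : Fin J, ((‖G (q j.succ) - G (q j.castSucc)‖₊ : ℝ≥0∞)) ^ 2 := by
            refine Finset.sum_congr rfl (fun j _ => ?_)
            rw [hQG j.succ, hQG j.castSucc]
        _ ≤ _ := this
    have hDb : ∑ p ∈ box, ((‖G p‖₊ : ℝ≥0∞)) ^ 2
        ≤ ∑ j₁ ∈ Finset.Icc (1:ℕ) (2 ^ l.1), ∑ j₂ ∈ Finset.Icc (1:ℕ) (2 ^ l.2),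
            ((‖Dterm L a l.1 l.2 j₁ j₂‖₊ : ℝ≥0∞)) ^ 2 := by
      rw [hbox, Finset.sum_product]
      refine Finset.sum_le_sum (fun j₁ _ => Finset.sum_le_sum (fun j₂ _ => ?_))
      exact Gl_le_Dterm L m l.1 l.2 a (j₁, j₂) h1m h2m
    calc (∑ j : Fin J, ((‖Qc l (k j.succ) - Qc l (k j.castSucc)‖₊ : ℝ≥0∞)) ^ 2) ^ (1/2:ℝ)
        ≤ (4 * (∑ j₁ ∈ Finset.Icc (1:ℕ) (2 ^ l.1), ∑ j₂ ∈ Finset.Icc (1:ℕ) (2 ^ l.2),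
            ((‖Dterm L a l.1 l.2 j₁ j₂‖₊ : ℝ≥0∞)) ^ 2)) ^ (1/2:ℝ) := by
          exact ENNReal.rpow_le_rpow (le_trans hcount (mul_le_mul_right hDb 4)) (by norm_num)
      _ = 2 * S2 L a l.1 l.2 := by
          rw [ENNReal.mul_rpow_of_nonneg _ _ (by norm_num : (0:ℝ) ≤ 1/2), four_rpow_half, S2]
  -- assemble
  calc (∑ j : Fin J, ((‖a (gridP L m (k j.succ).1) (gridP L m (k j.succ).2)
        - a (gridP L m (k j.castSucc).1) (gridP L m (k j.castSucc).2)‖₊ : ℝ≥0∞)) ^ 2) ^ (1/2:ℝ)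
      ≤ (∑ j : Fin J, (∑ l ∈ s, ((‖Qc l (k j.succ) - Qc l (k j.castSucc)‖₊ : ℝ≥0∞))) ^ 2) ^ (1/2:ℝ) := by
        refine ENNReal.rpow_le_rpow (Finset.sum_le_sum (fun j _ => ?_)) (by norm_num)
        refine pow_le_pow_left' ?_ 2
        rw [hstep j]
        calc ((‖∑ l ∈ s, (Qc l (k j.succ) - Qc l (k j.castSucc))‖₊ : ℝ≥0∞))
            ≤ ((∑ l ∈ s, ‖Qc l (k j.succ) - Qc l (k j.castSucc)‖₊ : ℝ≥0) : ℝ≥0∞) :=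
              ENNReal.coe_le_coe.2 (nnnorm_sum_le s _)
          _ = ∑ l ∈ s, ((‖Qc l (k j.succ) - Qc l (k j.castSucc)‖₊ : ℝ≥0∞)) :=
              ENNReal.coe_finset_sum _ _
    _ ≤ ∑ l ∈ s, (∑ j : Fin J, ((‖Qc l (k j.succ) - Qc l (k j.castSucc)‖₊ : ℝ≥0∞)) ^ 2) ^ (1/2:ℝ) :=
        enn_minkowski J s _
    _ ≤ ∑ l ∈ s, 2 * S2 L a l.1 l.2 := Finset.sum_le_sum hscale
    _ = 2 * ∑ l ∈ s, S2 L a l.1 l.2 := by rw [Finset.mul_sum]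
    _ ≤ 2 * ∑' l : ℕ+ × ℕ+, S2 L a l.1 l.2 := by
        refine mul_le_mul_right ?_ 2
        set e : ℕ × ℕ → ℕ+ × ℕ+ := fun l =>
          (⟨max l.1 1, lt_of_lt_of_le one_pos (le_max_right _ _)⟩,
           ⟨max l.2 1, lt_of_lt_of_le one_pos (le_max_right _ _)⟩) with he
        have hecoe : ∀ l ∈ s, ((e l).1 : ℕ) = l.1 ∧ ((e l).2 : ℕ) = l.2 := by
          intro l hl
          rw [hs, Finset.mem_product, Finset.mem_Icc, Finset.mem_Icc] at hl
          constructor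
          · show max l.1 1 = l.1
            omega
          · show max l.2 1 = l.2
            omega
        have hinj : ∀ x ∈ s, ∀ y ∈ s, e x = e y → x = y := by
          intro x hx y hy hxy
          have h1 := hecoe x hx
          have h2 := hecoe y hy
          have : ((e x).1 : ℕ) = ((e y).1 : ℕ) ∧ ((e x).2 : ℕ) = ((e y).2 : ℕ) := by
            rw [hxy]; exact ⟨rfl, rfl⟩
          ext
          · rw [← h1.1, ← h2.1]; exact this.1
          · rw [← h1.2, ← h2.2]; exact this.2
        calc ∑ l ∈ s, S2 L a l.1 l.2
            = ∑ l ∈ s, S2 L a ((e l).1 : ℕ) ((e l).2 : ℕ) := by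
              refine Finset.sum_congr rfl (fun l hl => ?_)
              rw [(hecoe l hl).1, (hecoe l hl).2]
          _ = ∑ y ∈ s.image e, S2 L a (y.1 : ℕ) (y.2 : ℕ) := (Finset.sum_image (f := fun y : ℕ+ × ℕ+ => S2 L a (y.1 : ℕ) (y.2 : ℕ)) hinj).symm
          _ ≤ ∑' y : ℕ+ × ℕ+, S2 L a (y.1 : ℕ) (y.2 : ℕ) := ENNReal.sum_le_tsum _

noncomputable def idx (L m : ℕ) (x : ℝ) : ℕ :=
  min ⌊(x-1)/((2:ℝ)^((L:ℝ)-(m:ℝ)))⌋₊ (2^m - 1)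

lemma idx_lt (L m : ℕ) (x : ℝ) : idx L m x < 2^m := by
  have h : (0:ℕ) < 2^m := by positivity
  have := Nat.min_le_right ⌊(x-1)/((2:ℝ)^((L:ℝ)-(m:ℝ)))⌋₊ (2^m - 1)
  rw [idx]
  omega

lemma two_pow_mul_h (L m : ℕ) : (2:ℝ)^m * (2:ℝ)^((L:ℝ)-(m:ℝ)) = 2^L := by
  have := gridP_top L m
  rw [gridP] at this
  push_cast at this
  linarith

lemma gridP_idx_bounds (L m : ℕ) (x : ℝ) (hx : x ∈ Set.Icc (1:ℝ) (1+2^L)) :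
    x - (2:ℝ)^((L:ℝ)-(m:ℝ)) ≤ gridP L m (idx L m x) ∧ gridP L m (idx L m x) ≤ x := by
  set h : ℝ := (2:ℝ)^((L:ℝ)-(m:ℝ)) with hh
  have hhpos : 0 < h := rpow2_pos _
  have hx1 : (1:ℝ) ≤ x := hx.1
  have hx2 : x ≤ 1 + 2^L := hx.2
  have hnn : (0:ℝ) ≤ (x-1)/h := div_nonneg (by linarith) hhpos.le
  have htop : (2:ℝ)^m * h = 2^L := two_pow_mul_h L m
  rcases le_or_gt ⌊(x-1)/h⌋₊ (2^m - 1) with hc | hc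
  · have hidx : idx L m x = ⌊(x-1)/h⌋₊ := by rw [idx, min_eq_left hc]
    set f := ⌊(x-1)/h⌋₊ with hf
    have h1 : (f:ℝ) ≤ (x-1)/h := Nat.floor_le hnn
    have h2 : (x-1)/h < f + 1 := Nat.lt_floor_add_one _
    have h1' : (f:ℝ) * h ≤ x - 1 := by
      rw [← le_div_iff₀ hhpos]; exact h1
    have h2' : x - 1 < ((f:ℝ) + 1) * h := by
      rw [← div_lt_iff₀ hhpos]; exact h2
    rw [hidx, gridP, ← hh]
    constructor <;> nlinarith
  · have hidx : idx L m x = 2^m - 1 := by rw [idx, min_eq_right (le_of_lt hc)]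
    have hge : (2^m : ℕ) ≤ ⌊(x-1)/h⌋₊ := by omega
    have h1 : ((2^m : ℕ) : ℝ) ≤ (x-1)/h := (Nat.le_floor_iff hnn).1 hge
    have h1' : ((2:ℝ)^m) * h ≤ x - 1 := by
      have := (le_div_iff₀ hhpos).1 h1
      push_cast at this
      linarith
    have hcast : ((2^m - 1 : ℕ) : ℝ) = (2:ℝ)^m - 1 := by
      have h2 : (1:ℕ) ≤ 2^m := Nat.one_le_two_pow
      push_cast [Nat.cast_sub h2]
      ring
    rw [hidx, gridP, ← hh, hcast]
    constructor <;> nlinarith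

set_option maxHeartbeats 1000000 in
/-- Two-parameter Rademacher–Menshov inequality: if `a` is continuous on `[1, 1+2^L]²` and
vanishes whenever one of its arguments equals `1`, then the two-parameter 2-variation is
controlled by the dyadic square functions. -/
theorem stmt1 (L : ℕ) (hL : 0 < L) (a : ℝ → ℝ → ℂ)
    (ha : ContinuousOn (fun p : ℝ × ℝ => a p.1 p.2)
      (Set.Icc 1 (1 + 2 ^ L) ×ˢ Set.Icc 1 (1 + 2 ^ L)))
    (hvan : ∀ s₁ ∈ Set.Icc (1 : ℝ) (1 + 2 ^ L), ∀ s₂ ∈ Set.Icc (1 : ℝ) (1 + 2 ^ L),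
      (s₁ = 1 ∨ s₂ = 1) → a s₁ s₂ = 0) :
    var2two a (Set.Icc (1 : ℝ) (1 + 2 ^ L) ×ˢ Set.Icc (1 : ℝ) (1 + 2 ^ L)) ≤
      2 * ∑' l : ℕ+ × ℕ+,
        (∑ j₁ ∈ Finset.Icc (1 : ℕ) (2 ^ (l.1 : ℕ)), ∑ j₂ ∈ Finset.Icc (1 : ℕ) (2 ^ (l.2 : ℕ)),
            ((‖a (1 + (j₁ : ℝ) * (2 : ℝ) ^ ((L : ℝ) - ((l.1 : ℕ) : ℝ)))
                  (1 + (j₂ : ℝ) * (2 : ℝ) ^ ((L : ℝ) - ((l.2 : ℕ) : ℝ)))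
                - a (1 + ((j₁ : ℝ) - 1) * (2 : ℝ) ^ ((L : ℝ) - ((l.1 : ℕ) : ℝ)))
                  (1 + (j₂ : ℝ) * (2 : ℝ) ^ ((L : ℝ) - ((l.2 : ℕ) : ℝ)))
                - a (1 + (j₁ : ℝ) * (2 : ℝ) ^ ((L : ℝ) - ((l.1 : ℕ) : ℝ)))
                  (1 + ((j₂ : ℝ) - 1) * (2 : ℝ) ^ ((L : ℝ) - ((l.2 : ℕ) : ℝ)))
                + a (1 + ((j₁ : ℝ) - 1) * (2 : ℝ) ^ ((L : ℝ) - ((l.1 : ℕ) : ℝ)))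
                  (1 + ((j₂ : ℝ) - 1) * (2 : ℝ) ^ ((L : ℝ) - ((l.2 : ℕ) : ℝ)))‖₊ : ℝ≥0∞)) ^ 2)
          ^ (1 / 2 : ℝ) := by
  show var2two a _ ≤ 2 * ∑' l : ℕ+ × ℕ+, S2 L a (l.1 : ℕ) (l.2 : ℕ)
  rw [var2two]
  refine iSup_le fun J => iSup_le fun u => iSup_le fun hu => iSup_le fun humem => ?_
  rcases Nat.eq_zero_or_pos J with rfl | hJ
  · rw [show (∑ j : Fin 0, ((‖a (u j.succ).1 (u j.succ).2
        - a (u j.castSucc).1 (u j.castSucc).2‖₊ : ℝ≥0∞)) ^ 2) = 0 by simp,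
      ENNReal.zero_rpow_of_pos (by norm_num)]
    exact zero_le
  refine ENNReal.le_of_forall_pos_le_add fun ε hε _ => ?_
  have humem1 : ∀ j, (u j).1 ∈ Set.Icc (1:ℝ) (1+2^L) := fun j => (humem j).1
  have humem2 : ∀ j, (u j).2 ∈ Set.Icc (1:ℝ) (1+2^L) := fun j => (humem j).2
  set ε' : ℝ≥0 := ε / (2 * (J+1)) with hε'def
  have hε'pos : 0 < ε' := by rw [hε'def]; positivity
  have hcont : ∀ j : Fin (J+1), ∃ δ > 0, ∀ ⦃p : ℝ×ℝ⦄,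
      p ∈ (Set.Icc (1:ℝ) (1+2^L) ×ˢ Set.Icc (1:ℝ) (1+2^L)) → dist p (u j) < δ →
      dist (a p.1 p.2) (a (u j).1 (u j).2) < (ε' : ℝ) := fun j =>
    Metric.continuousWithinAt_iff.1 (ha.continuousWithinAt (humem j)) ε' (by exact_mod_cast hε'pos)
  choose δf hδfpos hδf using hcont
  have hne1 : (Finset.univ : Finset (Fin (J+1))).Nonempty := Finset.univ_nonempty
  have hneJ : (Finset.univ : Finset (Fin J)).Nonempty := by
    have : Nonempty (Fin J) := ⟨⟨0, hJ⟩⟩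
    exact Finset.univ_nonempty
  set γ : ℝ := Finset.univ.inf' hne1 δf with hγdef
  have hγpos : 0 < γ := (Finset.lt_inf'_iff hne1).2 fun j _ => hδfpos j
  have hγle : ∀ j, γ ≤ δf j := fun j => Finset.inf'_le δf (Finset.mem_univ j)
  set δ₁ : ℝ := Finset.univ.inf' hneJ (fun j : Fin J =>
    min ((u j.succ).1 - (u j.castSucc).1) ((u j.succ).2 - (u j.castSucc).2)) with hδ₁def
  have hδ₁pos : 0 < δ₁ := (Finset.lt_inf'_iff hneJ).2 fun j _ =>
    lt_min (by linarith [(hu j).1]) (by linarith [(hu j).2])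
  have hδ₁le : ∀ j : Fin J, δ₁ ≤ (u j.succ).1 - (u j.castSucc).1
      ∧ δ₁ ≤ (u j.succ).2 - (u j.castSucc).2 := fun j =>
    ⟨le_trans (Finset.inf'_le _ (Finset.mem_univ j)) (min_le_left _ _),
     le_trans (Finset.inf'_le _ (Finset.mem_univ j)) (min_le_right _ _)⟩
  set c₀ : ℝ := min γ (δ₁/2) with hc₀def
  have hc₀pos : 0 < c₀ := lt_min hγpos (by linarith)
  obtain ⟨m, hm⟩ := pow_unbounded_of_one_lt ((2:ℝ)^L / c₀) (one_lt_two)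
  set h : ℝ := (2:ℝ)^((L:ℝ)-(m:ℝ)) with hhdef
  have hhpos : 0 < h := rpow2_pos _
  have hh_eq : h = (2:ℝ)^L / 2^m := by
    have := two_pow_mul_h L m
    have h2m : (0:ℝ) < 2^m := by positivity
    field_simp at this ⊢
    linarith
  have hhlt : h < c₀ := by
    rw [hh_eq]
    rw [div_lt_iff₀ hc₀pos] at hm
    rw [div_lt_iff₀ (by positivity : (0:ℝ) < 2^m)]
    linarith [mul_comm ((2:ℝ)^m) c₀]
  set k : Fin (J+1) → ℕ × ℕ := fun j => (idx L m (u j).1, idx L m (u j).2) with hkdef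
  have hklt : ∀ j, (k j).1 < 2^m ∧ (k j).2 < 2^m := fun j => ⟨idx_lt L m _, idx_lt L m _⟩
  have hb1 : ∀ j, (u j).1 - h ≤ gridP L m (k j).1 ∧ gridP L m (k j).1 ≤ (u j).1 :=
    fun j => gridP_idx_bounds L m _ (humem1 j)
  have hb2 : ∀ j, (u j).2 - h ≤ gridP L m (k j).2 ∧ gridP L m (k j).2 ≤ (u j).2 :=
    fun j => gridP_idx_bounds L m _ (humem2 j)
  have hstrict : ∀ j : Fin J, (k j.castSucc).1 < (k j.succ).1 ∧ (k j.castSucc).2 < (k j.succ).2 := by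
    intro j
    have hgap := hδ₁le j
    constructor
    · have : gridP L m (k j.castSucc).1 < gridP L m (k j.succ).1 := by
        have e1 := (hb1 j.castSucc).2
        have e2 := (hb1 j.succ).1
        have : h < δ₁/2 := lt_of_lt_of_le hhlt (min_le_right _ _)
        linarith [hgap.1]
      exact (gridP_mono L m).lt_iff_lt.1 this
    · have : gridP L m (k j.castSucc).2 < gridP L m (k j.succ).2 := by
        have e1 := (hb2 j.castSucc).2
        have e2 := (hb2 j.succ).1
        have : h < δ₁/2 := lt_of_lt_of_le hhlt (min_le_right _ _)
        linarith [hgap.2]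
      exact (gridP_mono L m).lt_iff_lt.1 this
  -- closeness of a at grid points
  have hclose : ∀ j : Fin (J+1),
      ‖a (gridP L m (k j).1) (gridP L m (k j).2) - a (u j).1 (u j).2‖₊ ≤ ε' := by
    intro j
    have hmem : ((gridP L m (k j).1, gridP L m (k j).2) : ℝ × ℝ)
        ∈ (Set.Icc (1:ℝ) (1+2^L) ×ˢ Set.Icc (1:ℝ) (1+2^L)) := by
      constructor
      · exact gridP_mem L m _ (le_of_lt (hklt j).1)
      · exact gridP_mem L m _ (le_of_lt (hklt j).2)
    have hdist : dist ((gridP L m (k j).1, gridP L m (k j).2) : ℝ × ℝ) (u j) < δf j := by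
      rw [Prod.dist_eq]
      have d1 : dist (gridP L m (k j).1) (u j).1 ≤ h := by
        rw [Real.dist_eq, abs_le]
        constructor <;> [linarith [(hb1 j).1]; linarith [(hb1 j).2, hhpos]]
      have d2 : dist (gridP L m (k j).2) (u j).2 ≤ h := by
        rw [Real.dist_eq, abs_le]
        constructor <;> [linarith [(hb2 j).1]; linarith [(hb2 j).2, hhpos]]
      have : h < δf j := lt_of_lt_of_le (lt_of_lt_of_le hhlt (min_le_left _ _)) (hγle j)
      exact lt_of_le_of_lt (max_le d1 d2) this
    have := hδf j hmem hdist
    rw [dist_eq_norm] at this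
    exact le_of_lt (by exact_mod_cast this)
  -- per-step bound
  have hstep : ∀ j : Fin J,
      (‖a (u j.succ).1 (u j.succ).2 - a (u j.castSucc).1 (u j.castSucc).2‖₊ : ℝ≥0∞)
      ≤ (‖a (gridP L m (k j.succ).1) (gridP L m (k j.succ).2)
          - a (gridP L m (k j.castSucc).1) (gridP L m (k j.castSucc).2)‖₊ : ℝ≥0∞)
        + ((2 * ε' : ℝ≥0) : ℝ≥0∞) := by
    intro j
    have key : ‖a (u j.succ).1 (u j.succ).2 - a (u j.castSucc).1 (u j.castSucc).2‖₊
        ≤ ‖a (gridP L m (k j.succ).1) (gridP L m (k j.succ).2)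
          - a (gridP L m (k j.castSucc).1) (gridP L m (k j.castSucc).2)‖₊ + 2 * ε' := by
      have e1 := hclose j.succ
      have e2 := hclose j.castSucc
      calc ‖a (u j.succ).1 (u j.succ).2 - a (u j.castSucc).1 (u j.castSucc).2‖₊
          = ‖(a (u j.succ).1 (u j.succ).2 - a (gridP L m (k j.succ).1) (gridP L m (k j.succ).2))
            + (a (gridP L m (k j.succ).1) (gridP L m (k j.succ).2)
              - a (gridP L m (k j.castSucc).1) (gridP L m (k j.castSucc).2))
            + (a (gridP L m (k j.castSucc).1) (gridP L m (k j.castSucc).2)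
              - a (u j.castSucc).1 (u j.castSucc).2)‖₊ := by
            congr 1
            ring
        _ ≤ ‖a (u j.succ).1 (u j.succ).2 - a (gridP L m (k j.succ).1) (gridP L m (k j.succ).2)‖₊
            + ‖a (gridP L m (k j.succ).1) (gridP L m (k j.succ).2)
              - a (gridP L m (k j.castSucc).1) (gridP L m (k j.castSucc).2)‖₊
            + ‖a (gridP L m (k j.castSucc).1) (gridP L m (k j.castSucc).2)
              - a (u j.castSucc).1 (u j.castSucc).2‖₊ :=
            le_trans (nnnorm_add_le _ _) (add_le_add_left (nnnorm_add_le _ _) _)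
        _ ≤ ε' + ‖a (gridP L m (k j.succ).1) (gridP L m (k j.succ).2)
              - a (gridP L m (k j.castSucc).1) (gridP L m (k j.castSucc).2)‖₊ + ε' := by
            refine add_le_add (add_le_add ?_ le_rfl) e2
            rw [← nndist_eq_nnnorm, nndist_comm, nndist_eq_nnnorm]
            exact e1
        _ = ‖a (gridP L m (k j.succ).1) (gridP L m (k j.succ).2)
              - a (gridP L m (k j.castSucc).1) (gridP L m (k j.castSucc).2)‖₊ + 2 * ε' := by
            ring
    calc (‖a (u j.succ).1 (u j.succ).2 - a (u j.castSucc).1 (u j.castSucc).2‖₊ : ℝ≥0∞)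
        ≤ ((‖a (gridP L m (k j.succ).1) (gridP L m (k j.succ).2)
          - a (gridP L m (k j.castSucc).1) (gridP L m (k j.castSucc).2)‖₊ + 2 * ε' : ℝ≥0) : ℝ≥0∞) :=
          ENNReal.coe_le_coe.2 key
      _ = _ := by rw [ENNReal.coe_add]
  -- main chain
  set Y : Fin J → ℝ≥0∞ := fun j => (‖a (gridP L m (k j.succ).1) (gridP L m (k j.succ).2)
      - a (gridP L m (k j.castSucc).1) (gridP L m (k j.castSucc).2)‖₊ : ℝ≥0∞) with hY
  set c : ℝ≥0∞ := ((2 * ε' : ℝ≥0) : ℝ≥0∞) with hc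
  calc (∑ j : Fin J, ((‖a (u j.succ).1 (u j.succ).2
          - a (u j.castSucc).1 (u j.castSucc).2‖₊ : ℝ≥0∞)) ^ 2) ^ (1/2:ℝ)
      ≤ (∑ j : Fin J, (Y j + c) ^ 2) ^ (1/2:ℝ) := by
        refine ENNReal.rpow_le_rpow (Finset.sum_le_sum fun j _ => ?_) (by norm_num)
        exact pow_le_pow_left' (hstep j) 2
    _ ≤ (∑ j : Fin J, (Y j) ^ 2) ^ (1/2:ℝ) + (∑ _j : Fin J, c ^ 2) ^ (1/2:ℝ) := by
        simp only [pow_two_rpow]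
        exact ENNReal.Lp_add_le Finset.univ _ _ (by norm_num : (1:ℝ) ≤ 2)
    _ ≤ 2 * (∑' l : ℕ+ × ℕ+, S2 L a l.1 l.2) + (ε : ℝ≥0∞) := by
        refine add_le_add (core L m J a hvan k hstrict hklt) ?_
        have h1 : (∑ _j : Fin J, c ^ 2) = (J : ℝ≥0∞) * c ^ 2 := by
          simp [Finset.sum_const, Finset.card_univ, nsmul_eq_mul]
        have h2 : (J : ℝ≥0∞) * c ^ 2 ≤ (((J:ℝ≥0∞) + 1) * c) ^ 2 := by
          rw [mul_pow]
          refine mul_le_mul_left ?_ _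
          calc (J : ℝ≥0∞) ≤ ((J:ℝ≥0∞) + 1) := le_add_right le_rfl
            _ ≤ ((J:ℝ≥0∞) + 1) ^ 2 := by
                rw [pow_two]
                exact le_mul_of_one_le_right' le_add_self
        have hεeq : (((J:ℝ≥0)+1) * (2 * ε') : ℝ≥0) = ε := by
          rw [hε'def, show ((J:ℝ≥0)+1) * (2 * (ε / (2 * ((J:ℝ≥0)+1))))
            = (2*((J:ℝ≥0)+1)) * (ε / (2 * ((J:ℝ≥0)+1))) by ring, mul_comm]
          exact div_mul_cancel₀ ε (by positivity)
        calc (∑ _j : Fin J, c ^ 2) ^ (1/2:ℝ)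
            ≤ ((((J:ℝ≥0∞)+1) * c) ^ (2:ℕ)) ^ (1/2:ℝ) := by
              rw [h1]; exact ENNReal.rpow_le_rpow h2 (by norm_num)
          _ = ((J:ℝ≥0∞)+1) * c := by
              rw [← ENNReal.rpow_natCast, ← ENNReal.rpow_mul]; norm_num
          _ = (ε : ℝ≥0∞) := by
              rw [hc, ← hεeq]
              push_cast
              ring
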